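/- For every affine Chvátal function f : ℝ^n → ℝ represented by a binary tree T, one of the following holds. Case 1: cc(T) = 0, and then f is an affine function with rational coefficients. Case 2: there exist a rational γ > 0 and affine Chvátal functions g₁, g₂ : ℝ^n → ℝ with f = γ·⌈g₁⌉ + g₂ (pointwise), such that g₁ and g₂ admit binary tree representations T₁ and T₂ respectively with cc(T₁) + cc(T₂) + 1 ≤ cc(T). -/
import Mathlib


/-- Binary tree representation of an affine Chvátal function on `ℝ^n`. -/
inductive ChvatalTree (n : ℕ) : Type
  | leaf (a : Fin n → ℚ) (c : ℚ) : ChvatalTree n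
  | ceil (t : ChvatalTree n) : ChvatalTree n
  | scale (a : ℚ) (t : ChvatalTree n) : ChvatalTree n
  | comb (a b : ℚ) (t₁ t₂ : ChvatalTree n) : ChvatalTree n

namespace ChvatalTree

/-- The function computed by the tree. -/
noncomputable def eval {n : ℕ} : ChvatalTree n → (Fin n → ℝ) → ℝ
  | leaf a c, x => (∑ j, (a j : ℝ) * x j) + (c : ℝ)
  | ceil t, x => (⌈t.eval x⌉ : ℝ)
  | scale a t, x => (a : ℝ) * t.eval x
  | comb a b t₁ t₂, x => (a : ℝ) * t₁.eval x + (b : ℝ) * t₂.eval x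

/-- All multiplicative edge labels are nonnegative rationals. -/
def Valid {n : ℕ} : ChvatalTree n → Prop
  | leaf _ _ => True
  | ceil t => t.Valid
  | scale a t => 0 ≤ a ∧ t.Valid
  | comb a b t₁ t₂ => 0 ≤ a ∧ 0 ≤ b ∧ t₁.Valid ∧ t₂.Valid

/-- The ceiling count of the tree. -/
def cc {n : ℕ} : ChvatalTree n → ℕ
  | leaf _ _ => 0
  | ceil t => t.cc + 1
  | scale _ t => t.cc
  | comb _ _ t₁ t₂ => t₁.cc + t₂.cc

/-- All leaves are homogeneous linear functions. -/
def Linear {n : ℕ} : ChvatalTree n → Prop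
  | leaf _ c => c = 0
  | ceil t => t.Linear
  | scale _ t => t.Linear
  | comb _ _ t₁ t₂ => t₁.Linear ∧ t₂.Linear

end ChvatalTree

/-- `f` is an affine Chvátal function. -/
def IsAffineChvatal {n : ℕ} (f : (Fin n → ℝ) → ℝ) : Prop :=
  ∃ T : ChvatalTree n, T.Valid ∧ ∀ x, T.eval x = f x

/-- `f` is a Chvátal function (all leaves homogeneous linear). -/
def IsChvatal {n : ℕ} (f : (Fin n → ℝ) → ℝ) : Prop :=
  ∃ T : ChvatalTree n, T.Valid ∧ T.Linear ∧ ∀ x, T.eval x = f x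

/-- For every affine Chvátal function given by a binary tree `T`, either
`cc(T) = 0` and the function is affine with rational coefficients, or the function equals
`γ⌈g₁⌉ + g₂` for a rational `γ > 0` and affine Chvátal functions `g₁, g₂` admitting tree
representations `T₁, T₂` with `cc(T₁) + cc(T₂) + 1 ≤ cc(T)`. -/
theorem chvatal_tree_case_analysis {n : ℕ} (T : ChvatalTree n) (hT : T.Valid) :
    (T.cc = 0 ∧ ∃ (a : Fin n → ℚ) (c : ℚ),
        ∀ x, T.eval x = (∑ j, (a j : ℝ) * x j) + (c : ℝ)) ∨
    (∃ (γ : ℚ) (T₁ T₂ : ChvatalTree n), 0 < γ ∧ T₁.Valid ∧ T₂.Valid ∧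
        T₁.cc + T₂.cc + 1 ≤ T.cc ∧
        ∀ x, T.eval x = (γ : ℝ) * (⌈T₁.eval x⌉ : ℝ) + T₂.eval x) := by

  induction T with
  | leaf a c =>
    exact Or.inl ⟨rfl, a, c, fun x => rfl⟩
  | ceil t ih =>
    right
    refine ⟨1, t, .leaf 0 0, one_pos, hT, trivial, le_refl _, fun x => ?_⟩
    simp [ChvatalTree.eval]
  | scale a t ih =>
    obtain ⟨ha, hv⟩ := hT
    rcases ih hv with ⟨h0, α, c, he⟩ | ⟨γ, T₁, T₂, hγ, hv1, hv2, hcc, he⟩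
    · left
      refine ⟨h0, fun j => a * α j, a * c, fun x => ?_⟩
      simp only [ChvatalTree.eval, he x]
      push_cast
      rw [mul_add, Finset.mul_sum]
      exact congrArg₂ (· + ·) (Finset.sum_congr rfl fun j _ => by ring) rfl
    · rcases ha.lt_or_eq with ha' | ha'
      · right
        refine ⟨a * γ, T₁, .scale a T₂, mul_pos ha' hγ, hv1, ⟨ha, hv2⟩, hcc, fun x => ?_⟩
        simp only [ChvatalTree.eval, he x]
        push_cast
        ring
      · right
        refine ⟨1, .leaf 0 0, .leaf 0 0, one_pos, trivial, trivial, ?_, fun x => ?_⟩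
        · simp only [ChvatalTree.cc]; omega
        · simp [ChvatalTree.eval, ← ha']
  | comb a b t₁ t₂ ih₁ ih₂ =>
    obtain ⟨ha, hb, hv1, hv2⟩ := hT
    rcases ih₁ hv1 with h₁ | ⟨γ, S₁, S₂, hγ, hs1, hs2, hcc, he⟩
    · rcases ih₂ hv2 with h₂ | ⟨γ, S₁, S₂, hγ, hs1, hs2, hcc, he⟩
      · left
        obtain ⟨h10, α₁, c₁, he₁⟩ := h₁
        obtain ⟨h20, α₂, c₂, he₂⟩ := h₂
        refine ⟨by simp [ChvatalTree.cc, h10, h20], fun j => a * α₁ j + b * α₂ j,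
          a * c₁ + b * c₂, fun x => ?_⟩
        simp only [ChvatalTree.eval, he₁ x, he₂ x]
        push_cast
        simp only [add_mul, Finset.sum_add_distrib, mul_add, Finset.mul_sum, mul_assoc]
        ring
      · rcases hb.lt_or_eq with hb' | hb'
        · right
          refine ⟨b * γ, S₁, .comb a b t₁ S₂, mul_pos hb' hγ, hs1, ⟨ha, hb, hv1, hs2⟩,
            ?_, fun x => ?_⟩
          · simp only [ChvatalTree.cc]; omega
          · simp only [ChvatalTree.eval, he x]
            push_cast
            ring
        · right
          refine ⟨1, .leaf 0 0, .scale a t₁, one_pos, trivial, ⟨ha, hv1⟩, ?_, fun x => ?_⟩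
          · simp only [ChvatalTree.cc]; omega
          · simp [ChvatalTree.eval, ← hb']
    · rcases ha.lt_or_eq with ha' | ha'
      · right
        refine ⟨a * γ, S₁, .comb a b S₂ t₂, mul_pos ha' hγ, hs1, ⟨ha, hb, hs2, hv2⟩,
          ?_, fun x => ?_⟩
        · simp only [ChvatalTree.cc]; omega
        · simp only [ChvatalTree.eval, he x]
          push_cast
          ring
      · right
        refine ⟨1, .leaf 0 0, .scale b t₂, one_pos, trivial, ⟨hb, hv2⟩, ?_, fun x => ?_⟩
        · simp only [ChvatalTree.cc]; omega
        · simp [ChvatalTree.eval, ← ha']
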